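/- For any connected graph G on at least 2 vertices, Z(G) ≤ sdim(G) + 3·r(G), where r(G) = |E(G)| − |V(G)| + 1 is the cycle rank of G. -/

import Mathlib

open SimpleGraph

/-- One step of the zero forcing color-change rule: add every white vertex that is
the unique white neighbor of some black vertex. -/
def zfStep {V : Type*} (G : SimpleGraph V) (B : Set V) : Set V :=
  B ∪ {w | ∃ u ∈ B, G.Adj u w ∧ ∀ x, G.Adj u x → x ∉ B → x = w}

/-- `S` is a zero forcing set if iterating the color-change rule blackens all vertices. -/
def IsZeroForcingSet {V : Type*} (G : SimpleGraph V) (S : Set V) : Prop :=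
  ∃ n : ℕ, (zfStep G)^[n] S = Set.univ

/-- The zero forcing number: minimum cardinality of a zero forcing set. -/
noncomputable def zeroForcingNumber {V : Type*} (G : SimpleGraph V) : ℕ :=
  sInf {n | ∃ S : Set V, S.ncard = n ∧ IsZeroForcingSet G S}

/-- A (finite) graph is a path graph: nonempty, connected, acyclic, max degree ≤ 2. -/
def IsPathGraph {V : Type*} (G : SimpleGraph V) : Prop :=
  Nonempty V ∧ G.Connected ∧ G.IsAcyclic ∧ ∀ v : V, (G.neighborSet v).ncard ≤ 2

/-- The path cover number: minimum number of vertex-disjoint induced paths covering `V`. -/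
noncomputable def pathCoverNumber {V : Type*} (G : SimpleGraph V) : ℕ :=
  sInf {n | ∃ P : Finset (Set V), P.card = n ∧
    (∀ S ∈ P, IsPathGraph (G.induce S)) ∧
    (P : Set (Set V)).PairwiseDisjoint id ∧ ⋃₀ (P : Set (Set V)) = Set.univ}

/-- `u` lies on an `x`–`v` geodesic. -/
def LiesBetween {V : Type*} (G : SimpleGraph V) (x u v : V) : Prop :=
  G.dist x u + G.dist u v = G.dist x v

/-- `x` strongly resolves the pair `u, v`. -/
def StronglyResolves {V : Type*} (G : SimpleGraph V) (x u v : V) : Prop :=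
  LiesBetween G x u v ∨ LiesBetween G x v u

/-- `W` is a strong resolving set of `G`. -/
def IsStrongResolvingSet {V : Type*} (G : SimpleGraph V) (W : Set V) : Prop :=
  ∀ u v : V, u ≠ v → ∃ x ∈ W, StronglyResolves G x u v

/-- The strong metric dimension: minimum cardinality of a strong resolving set. -/
noncomputable def sdim {V : Type*} (G : SimpleGraph V) : ℕ :=
  sInf {n | ∃ W : Set V, W.ncard = n ∧ IsStrongResolvingSet G W}

/-- A leaf is a vertex of degree one. -/
def IsLeaf {V : Type*} (G : SimpleGraph V) (v : V) : Prop :=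
  (G.neighborSet v).ncard = 1

/-- `σ(G)`: the number of leaves of `G`. -/
noncomputable def leafCount {V : Type*} (G : SimpleGraph V) : ℕ :=
  {v | IsLeaf G v}.ncard

section Aux

open SimpleGraph Walk

variable {V : Type*}

lemma zfStep_subset (G : SimpleGraph V) (B : Set V) : B ⊆ zfStep G B :=
  Set.subset_union_left

lemma zfStep_iterate_subset (G : SimpleGraph V) (B : Set V) (n : ℕ) :
    B ⊆ (zfStep G)^[n] B := by
  induction n with
  | zero => simp
  | succ n ih =>
    rw [Function.iterate_succ_apply']
    exact ih.trans (zfStep_subset G _)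

lemma exists_zf_fixed [Fintype V] (G : SimpleGraph V) (B : Set V) :
    ∃ k, zfStep G ((zfStep G)^[k] B) = (zfStep G)^[k] B := by
  by_contra h
  push_neg at h
  have hstrict : ∀ k, ((zfStep G)^[k] B).ncard < ((zfStep G)^[k + 1] B).ncard := by
    intro k
    rw [Function.iterate_succ_apply']
    exact Set.ncard_lt_ncard
      (HasSubset.Subset.ssubset_of_ne (zfStep_subset G _) (Ne.symm (h k))) (Set.toFinite _)
  have hge : ∀ k, k ≤ ((zfStep G)^[k] B).ncard := by
    intro k
    induction k with
    | zero => exact Nat.zero_le _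
    | succ k ih => exact lt_of_le_of_lt ih (hstrict k)
  have hle : ((zfStep G)^[Fintype.card V + 1] B).ncard ≤ Fintype.card V := by
    have := Set.ncard_le_ncard (Set.subset_univ ((zfStep G)^[Fintype.card V + 1] B))
      (Set.toFinite _)
    simpa [Set.ncard_univ, Nat.card_eq_fintype_card] using this
  have := hge (Fintype.card V + 1)
  omega

/-- In a tree, every path realizes the distance. -/
lemma tree_path_length_eq_dist {T : SimpleGraph V} (hc : T.Connected) (hA : T.IsAcyclic)
    {u v : V} (p : T.Walk u v) (hp : p.IsPath) : p.length = T.dist u v := by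
  classical
  obtain ⟨q, hq⟩ := hc.exists_walk_length_eq_dist u v
  have hkey : p = q.bypass := by
    have := hA.path_unique ⟨p, hp⟩ ⟨q.bypass, q.bypass_isPath⟩
    exact congrArg Subtype.val this
  have h1 : T.dist u v ≤ p.length := SimpleGraph.dist_le p
  have h2 : p.length ≤ q.length := by rw [hkey]; exact q.length_bypass_le
  omega

lemma tree_adj_dist_cases {T : SimpleGraph V} (hc : T.Connected) (hA : T.IsAcyclic)
    (ρ : V) {w c : V} (h : T.Adj w c) :
    T.dist ρ c + 1 = T.dist ρ w ∨ T.dist ρ w + 1 = T.dist ρ c := by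
  classical
  obtain ⟨pc, hpclen⟩ := hc.exists_walk_length_eq_dist ρ c
  have hpc : pc.IsPath := pc.isPath_of_length_eq_dist hpclen
  by_cases hw : w ∈ pc.support
  · right
    have hspec := pc.take_spec hw
    have h1 : (pc.takeUntil w hw).length = T.dist ρ w :=
      tree_path_length_eq_dist hc hA _ (hpc.takeUntil hw)
    have h2 : (pc.dropUntil w hw).length = T.dist w c :=
      tree_path_length_eq_dist hc hA _ (hpc.dropUntil hw)
    have hwc : T.dist w c = 1 := by
      have hle : T.dist w c ≤ 1 := by
        have := SimpleGraph.dist_le (Walk.cons h Walk.nil)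
        simpa using this
      have hpos : 0 < T.dist w c := h.reachable.pos_dist_of_ne h.ne
      omega
    have hlen : (pc.takeUntil w hw).length + (pc.dropUntil w hw).length = pc.length := by
      conv_rhs => rw [← hspec]
      rw [Walk.length_append]
    omega
  · left
    have hpath : (pc.concat h.symm).IsPath := by
      rw [← Walk.isPath_reverse_iff, Walk.reverse_concat]
      rw [Walk.cons_isPath_iff]
      refine ⟨(Walk.isPath_reverse_iff pc).2 hpc, ?_⟩
      simpa using hw
    have := tree_path_length_eq_dist hc hA _ hpath
    rw [Walk.length_concat] at this
    omega

lemma tree_parent_exists {T : SimpleGraph V} (hc : T.Connected) (hA : T.IsAcyclic)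
    {ρ w : V} (hne : w ≠ ρ) :
    ∃ u, T.Adj w u ∧ T.dist ρ u + 1 = T.dist ρ w := by
  obtain ⟨p, hplen⟩ := hc.exists_walk_length_eq_dist ρ w
  have hp : p.IsPath := p.isPath_of_length_eq_dist hplen
  obtain ⟨u, hadj, q, hq⟩ := Walk.exists_eq_cons_of_ne hne p.reverse
  have hqrev : q.reverse.IsPath := by
    rw [Walk.isPath_reverse_iff]
    have : p.reverse.IsPath := (Walk.isPath_reverse_iff p).2 hp
    rw [hq, Walk.cons_isPath_iff] at this
    exact this.1
  have hqlen : q.reverse.length = T.dist ρ u :=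
    tree_path_length_eq_dist hc hA _ hqrev
  have hlen : p.reverse.length = p.length := Walk.length_reverse p
  rw [hq, Walk.length_cons] at hlen
  rw [Walk.length_reverse] at hqlen
  exact ⟨u, hadj, by omega⟩

lemma tree_parent_unique {T : SimpleGraph V} (hc : T.Connected) (hA : T.IsAcyclic)
    {ρ c u₁ u₂ : V} (h₁ : T.Adj c u₁) (h₂ : T.Adj c u₂)
    (hd₁ : T.dist ρ u₁ + 1 = T.dist ρ c) (hd₂ : T.dist ρ u₂ + 1 = T.dist ρ c) :
    u₁ = u₂ := by
  classical
  obtain ⟨p₁, hp₁len⟩ := hc.exists_walk_length_eq_dist ρ u₁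
  have hp₁ : p₁.IsPath := p₁.isPath_of_length_eq_dist hp₁len
  obtain ⟨p₂, hp₂len⟩ := hc.exists_walk_length_eq_dist ρ u₂
  have hp₂ : p₂.IsPath := p₂.isPath_of_length_eq_dist hp₂len
  have hc₁ : c ∉ p₁.support := by
    intro hmem
    have hle := p₁.length_takeUntil_le hmem
    have : (p₁.takeUntil c hmem).length = T.dist ρ c :=
      tree_path_length_eq_dist hc hA _ (hp₁.takeUntil hmem)
    omega
  have hc₂ : c ∉ p₂.support := by
    intro hmem
    have hle := p₂.length_takeUntil_le hmem
    have : (p₂.takeUntil c hmem).length = T.dist ρ c :=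
      tree_path_length_eq_dist hc hA _ (hp₂.takeUntil hmem)
    omega
  have hq₁ : (p₁.concat h₁.symm).IsPath := by
    rw [← Walk.isPath_reverse_iff, Walk.reverse_concat, Walk.cons_isPath_iff]
    exact ⟨(Walk.isPath_reverse_iff p₁).2 hp₁, by simpa using hc₁⟩
  have hq₂ : (p₂.concat h₂.symm).IsPath := by
    rw [← Walk.isPath_reverse_iff, Walk.reverse_concat, Walk.cons_isPath_iff]
    exact ⟨(Walk.isPath_reverse_iff p₂).2 hp₂, by simpa using hc₂⟩
  have heq : p₁.concat h₁.symm = p₂.concat h₂.symm := by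
    have := hA.path_unique ⟨p₁.concat h₁.symm, hq₁⟩ ⟨p₂.concat h₂.symm, hq₂⟩
    exact congrArg Subtype.val this
  have hsup : (p₁.concat h₁.symm).reverse.support = (p₂.concat h₂.symm).reverse.support := by
    rw [heq]
  rw [Walk.reverse_concat, Walk.reverse_concat, Walk.support_cons, Walk.support_cons] at hsup
  have hhead : p₁.reverse.support.head? = p₂.reverse.support.head? := by
    have := List.tail_eq_of_cons_eq hsup
    rw [this]
  rw [p₁.reverse.support_eq_cons, p₂.reverse.support_eq_cons] at hhead
  simpa using hhead

/-- For a leaf `u` with unique neighbor `u'`, distances from `u` go through `u'`. -/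
lemma leaf_dist {G : SimpleGraph V} (hc : G.Connected) {u u' y : V}
    (hnb : G.neighborSet u = {u'}) (hy : y ≠ u) :
    G.dist u y = G.dist u' y + 1 := by
  have hadj : G.Adj u u' := by
    have : u' ∈ G.neighborSet u := by rw [hnb]; exact rfl
    exact this
  have hle : G.dist u y ≤ G.dist u' y + 1 := by
    have htr := hc.dist_triangle (u := u) (v := u') (w := y)
    have h1 : G.dist u u' ≤ 1 := by
      have := SimpleGraph.dist_le (Walk.cons hadj Walk.nil)
      simpa using this
    omega
  have hge : G.dist u' y + 1 ≤ G.dist u y := by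
    obtain ⟨p, hplen⟩ := hc.exists_walk_length_eq_dist u y
    cases p with
    | nil => exact absurd rfl hy
    | @cons _ x _ h q =>
      have hx : x = u' := by
        have : x ∈ G.neighborSet u := h
        rw [hnb] at this
        exact this
      subst hx
      have := SimpleGraph.dist_le q
      rw [Walk.length_cons] at hplen
      omega
  omega

/-- Each strong resolving set misses at most one leaf: `σ(G) ≤ sdim(G) + 1`. -/
lemma leafCount_le_sdim_add_one {G : SimpleGraph V} [Fintype V] (hc : G.Connected) :
    leafCount G ≤ sdim G + 1 := by
  classical
  have hne : {n | ∃ W : Set V, W.ncard = n ∧ IsStrongResolvingSet G W}.Nonempty := by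
    refine ⟨(Set.univ : Set V).ncard, Set.univ, rfl, ?_⟩
    intro u v huv
    refine ⟨v, Set.mem_univ v, Or.inr ?_⟩
    unfold LiesBetween
    rw [SimpleGraph.dist_self]
    omega
  have hkey : ∀ n ∈ {n | ∃ W : Set V, W.ncard = n ∧ IsStrongResolvingSet G W},
      leafCount G ≤ n + 1 := by
    rintro n ⟨W, rfl, hres⟩
    set L := {v | IsLeaf G v} with hL
    have haux : ∀ u v : V, IsLeaf G u → u ∉ W → v ≠ u → ∀ x ∈ W, ¬ LiesBetween G x u v := by
      intro u v hu huW hvu x hxW hlie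
      obtain ⟨u', hu'⟩ := Set.ncard_eq_one.1 hu
      have hxu : x ≠ u := fun h => huW (h ▸ hxW)
      have h1 : G.dist x u = G.dist x u' + 1 := by
        rw [SimpleGraph.dist_comm (u := x) (v := u), SimpleGraph.dist_comm (u := x) (v := u')]
        exact leaf_dist hc hu' hxu
      have h2 : G.dist u v = G.dist u' v + 1 := leaf_dist hc hu' hvu
      have htr := hc.dist_triangle (u := x) (v := u') (w := v)
      have htr2 := hc.dist_triangle (u := x) (v := u) (w := v)
      unfold LiesBetween at hlie
      omega
    have hsub : (L \ W).Subsingleton := by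
      intro u hu v hv
      by_contra hne'
      obtain ⟨x, hxW, hres'⟩ := hres u v hne'
      cases hres' with
      | inl h => exact haux u v hu.1 hu.2 (Ne.symm hne') x hxW h
      | inr h => exact haux v u hv.1 hv.2 hne' x hxW h
    have hcard : (L \ W).ncard ≤ 1 := by
      rcases Set.Subsingleton.eq_empty_or_singleton hsub with h | ⟨a, h⟩
      · simp [h]
      · simp [h]
    have hLsub : L ⊆ W ∪ (L \ W) := by
      intro v hv
      by_cases h : v ∈ W
      · exact Or.inl h
      · exact Or.inr ⟨hv, h⟩
    have := (Set.ncard_le_ncard hLsub (Set.toFinite _)).trans (Set.ncard_union_le _ _)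
    have hLL : leafCount G = L.ncard := by rw [hL]; rfl
    omega
  exact hkey _ (Nat.sInf_mem hne)

/-- Deleting an edge lying on a cycle preserves connectivity. -/
lemma connected_delete_cycle_edge {G : SimpleGraph V} (hc : G.Connected) {a b : V}
    (hreach : (G \ fromEdgeSet {s(a, b)}).Reachable a b) :
    (G \ fromEdgeSet {s(a, b)}).Connected := by
  rw [connected_iff]
  refine ⟨fun u v => ?_, hc.nonempty⟩
  obtain ⟨p⟩ := hc.preconnected u v
  induction p with
  | nil => rfl
  | @cons x y z h q ih =>
    refine Reachable.trans ?_ ih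
    by_cases he : s(x, y) = s(a, b)
    · rcases Sym2.eq_iff.1 he with ⟨rfl, rfl⟩ | ⟨rfl, rfl⟩
      · exact hreach
      · exact hreach.symm
    · exact SimpleGraph.Adj.reachable (by simp [h, he])

lemma exists_spanning_tree_aux [Fintype V] :
    ∀ n (G : SimpleGraph V), G.Connected → G.edgeSet.ncard ≤ n →
      ∃ T ≤ G, T.Connected ∧ T.IsAcyclic := by
  intro n
  induction n with
  | zero =>
    intro G hc _
    by_cases hA : G.IsAcyclic
    · exact ⟨G, le_refl G, hc, hA⟩
    · exfalso
      unfold SimpleGraph.IsAcyclic at hA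
      push_neg at hA
      obtain ⟨v, c, hcyc⟩ := hA
      have h3 := hcyc.three_le_length
      have : c.edges ≠ [] := by
        intro h
        have := c.length_edges
        rw [h] at this
        simp at this
        omega
      obtain ⟨e, he⟩ := List.exists_mem_of_ne_nil _ this
      have heG : e ∈ G.edgeSet := c.edges_subset_edgeSet he
      have : G.edgeSet.ncard = 0 := by omega
      rw [Set.ncard_eq_zero (Set.toFinite _)] at this
      rw [this] at heG
      exact heG
  | succ n ih =>
    intro G hc hle
    by_cases hA : G.IsAcyclic
    · exact ⟨G, le_refl G, hc, hA⟩
    · unfold SimpleGraph.IsAcyclic at hA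
      push_neg at hA
      obtain ⟨v, c, hcyc⟩ := hA
      have h3 := hcyc.three_le_length
      have hene : c.edges ≠ [] := by
        intro h
        have := c.length_edges
        rw [h] at this
        simp at this
        omega
      obtain ⟨e, he⟩ := List.exists_mem_of_ne_nil _ hene
      induction e using Sym2.ind with
      | _ a b =>
        have hreach : G.Adj a b ∧ (G \ fromEdgeSet {s(a, b)}).Reachable a b :=
          (SimpleGraph.adj_and_reachable_delete_edges_iff_exists_cycle).2 ⟨v, c, hcyc, he⟩
        set G' := G \ fromEdgeSet {s(a, b)} with hG'
        have hG'c : G'.Connected := connected_delete_cycle_edge hc hreach.2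
        have hG'le : G' ≤ G := sdiff_le
        have hssub : G'.edgeSet ⊂ G.edgeSet := by
          refine ⟨SimpleGraph.edgeSet_mono hG'le, fun hsub => ?_⟩
          have hmem : s(a, b) ∈ G.edgeSet := hreach.1
          have : s(a, b) ∈ G'.edgeSet := hsub hmem
          rw [SimpleGraph.mem_edgeSet] at this
          simp [hG'] at this
          exact hreach.1.ne this.2
        have hlt : G'.edgeSet.ncard < G.edgeSet.ncard :=
          Set.ncard_lt_ncard hssub (Set.toFinite _)
        obtain ⟨T, hT1, hT2, hT3⟩ := ih G' hG'c (by omega)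
        exact ⟨T, hT1.trans hG'le, hT2, hT3⟩

lemma exists_spanning_tree [Fintype V] (G : SimpleGraph V) (hc : G.Connected) :
    ∃ T ≤ G, T.Connected ∧ T.IsAcyclic :=
  exists_spanning_tree_aux G.edgeSet.ncard G hc (le_refl _)

/-- The endpoints of a finite set of edges number at most twice the number of edges. -/
lemma ncard_endpoints_le (s : Set (Sym2 V)) (hs : s.Finite) :
    {v | ∃ e ∈ s, v ∈ e}.ncard ≤ 2 * s.ncard := by
  classical
  refine Set.Finite.induction_on (motive := fun s _ => {v | ∃ e ∈ s, v ∈ e}.ncard ≤ 2 * s.ncard) s hs (by simp) ?_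
  intro e s hes hsfin ih
  have hsplit : {v | ∃ e' ∈ insert e s, v ∈ e'} =
      {v | v ∈ e} ∪ {v | ∃ e' ∈ s, v ∈ e'} := by
    ext v
    simp only [Set.mem_setOf_eq, Set.mem_insert_iff, Set.mem_union]
    constructor
    · rintro ⟨e', (rfl | h), hv⟩
      · exact Or.inl hv
      · exact Or.inr ⟨e', h, hv⟩
    · rintro (hv | ⟨e', h, hv⟩)
      · exact ⟨e, Or.inl rfl, hv⟩
      · exact ⟨e', Or.inr h, hv⟩
  have h2 : {v | v ∈ e}.ncard ≤ 2 := by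
    induction e using Sym2.ind with
    | _ a b =>
      have : {v | v ∈ s(a, b)} = {a, b} := by
        ext v; simp [Sym2.mem_iff]
      rw [this]
      exact (Set.ncard_insert_le _ _).trans (by simp)
  have := (Set.ncard_union_le {v | v ∈ e} {v | ∃ e' ∈ s, v ∈ e'})
  rw [Set.ncard_insert_of_notMem hes hsfin]
  rw [hsplit]
  omega

end Aux

/-- For any connected graph `G` on at least 2 vertices,
`Z(G) ≤ sdim(G) + 3·r(G)`, where `r(G) = |E(G)| − |V(G)| + 1` is the cycle rank. -/
theorem zeroForcingNumber_le_sdim_add_cycleRank {V : Type*} [Fintype V]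
    (G : SimpleGraph V) (hG : G.Connected) (h2 : 2 ≤ Fintype.card V) :
    zeroForcingNumber G ≤ sdim G + 3 * (G.edgeSet.ncard + 1 - Fintype.card V) := by
  classical
  obtain ⟨T, hTle, hTc, hTa⟩ := exists_spanning_tree G hG
  set L := {v | IsLeaf G v} with hLdef
  set ED := G.edgeSet \ T.edgeSet with hEDdef
  set D := {v | ∃ e ∈ ED, v ∈ e} with hDdef
  have hVne : Nonempty V := Fintype.card_pos_iff.mp (by omega)
  obtain ⟨ρ, hρ⟩ : ∃ ρ : V, L.Nonempty → ρ ∈ L := by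
    by_cases h : L.Nonempty
    · exact ⟨h.some, fun _ => h.some_mem⟩
    · exact ⟨Classical.arbitrary V, fun hn => absurd hn h⟩
  set B0 := (L \ {ρ}) ∪ D with hB0
  have hdeg1 : ∀ v : V, (T.neighborSet v).Nonempty := by
    intro v
    obtain ⟨u, hu⟩ := Fintype.exists_ne_of_one_lt_card (by omega) v
    obtain ⟨p⟩ := hTc.preconnected v u
    cases p with
    | nil => exact absurd rfl hu
    | cons h q => exact ⟨_, h⟩
  obtain ⟨k, hfix⟩ := exists_zf_fixed G B0
  set F := (zfStep G)^[k] B0 with hF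
  have hB0F : B0 ⊆ F := zfStep_iterate_subset G B0 k
  have hDF : D ⊆ F := (Set.subset_union_right (s := L \ {ρ})).trans hB0F
  have hLF : L \ {ρ} ⊆ F := (Set.subset_union_left (t := D)).trans hB0F
  have hTstep : zfStep T F ⊆ F := by
    intro w hw
    rcases hw with hw | ⟨u, huF, hadj, huniq⟩
    · exact hw
    · rw [← hfix]
      refine Or.inr ⟨u, huF, hTle hadj, ?_⟩
      intro x hxadj hxF
      by_cases hTx : T.Adj u x
      · exact huniq x hTx hxF
      · exact absurd (hDF ⟨s(u, x), ⟨(G.mem_edgeSet).2 hxadj,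
          fun hmem => hTx ((T.mem_edgeSet).1 hmem)⟩, by simp⟩) hxF
  have hwhitedeg : ∀ v, v ∉ F → v ≠ ρ → 2 ≤ (T.neighborSet v).ncard := by
    intro v hvF hvρ
    by_contra hlt
    push_neg at hlt
    obtain ⟨u0, hu0⟩ := hdeg1 v
    have hpos : 0 < (T.neighborSet v).ncard := (Set.ncard_pos (Set.toFinite _)).2 ⟨u0, hu0⟩
    have h1 : (T.neighborSet v).ncard = 1 := by omega
    obtain ⟨u', hu'⟩ := Set.ncard_eq_one.1 h1
    have hsub' : T.neighborSet v ⊆ G.neighborSet v := fun x hx => hTle hx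
    by_cases hGe : G.neighborSet v = {u'}
    · have hleaf : IsLeaf G v := by unfold IsLeaf; rw [hGe]; simp
      exact hvF (hLF ⟨hleaf, by simpa using hvρ⟩)
    · have hssub : {u'} ⊂ G.neighborSet v :=
        ssubset_of_subset_of_ne (hu' ▸ hsub') (Ne.symm hGe)
      obtain ⟨x, hxG, hxn⟩ := Set.exists_of_ssubset hssub
      have hxT : ¬ T.Adj v x := fun h => hxn (by rw [← hu']; exact h)
      exact hvF (hDF ⟨s(v, x), ⟨(G.mem_edgeSet).2 hxG,
        fun hmem => hxT ((T.mem_edgeSet).1 hmem)⟩, by simp⟩)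
  have hFuniv : F = Set.univ := by
    by_contra hne
    obtain ⟨w0, hw0⟩ := (Set.ne_univ_iff_exists_notMem F).1 hne
    obtain ⟨w, hwW, hwmax⟩ := Set.exists_max_image (Fᶜ : Set V) (fun v => T.dist ρ v)
      (Set.toFinite _) ⟨w0, hw0⟩
    rw [Set.mem_compl_iff] at hwW
    set d := T.dist ρ w with hd
    have hwmax' : ∀ x, x ∉ F → T.dist ρ x ≤ d := fun x hx => hwmax x hx
    by_cases hd0 : d = 0
    · have hWsub : ∀ x, x ∉ F → x = ρ := by
        intro x hx
        have h1 := hwmax' x hx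
        have h2 : T.dist ρ x = 0 := by omega
        exact ((hTc.dist_eq_zero_iff).1 h2).symm
      obtain ⟨u, hu⟩ := hdeg1 ρ
      have huadj : T.Adj ρ u := hu
      have huF : u ∈ F := by
        by_contra h
        exact huadj.ne' (hWsub u h)
      have hρF : ρ ∈ F :=
        hTstep (Or.inr ⟨u, huF, huadj.symm, fun x _ hxF => hWsub x hxF⟩)
      have hwρ : w = ρ := ((hTc.dist_eq_zero_iff).1 (show T.dist ρ w = 0 by omega)).symm
      exact hwW (hwρ ▸ hρF)
    · have hwρ : w ≠ ρ := by
        intro h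
        rw [h] at hd
        rw [SimpleGraph.dist_self] at hd
        omega
      obtain ⟨P, hPadj, hPd⟩ := tree_parent_exists hTc hTa hwρ
      have hdeg2 := hwhitedeg w hwW hwρ
      obtain ⟨c, hcnb, hcP⟩ := Set.exists_ne_of_one_lt_ncard (s := T.neighborSet w) (by omega) P
      have hcadj : T.Adj w c := hcnb
      have hcd : T.dist ρ c = d + 1 := by
        rcases tree_adj_dist_cases hTc hTa ρ hcadj with h | h
        · exact absurd (tree_parent_unique hTc hTa hcadj hPadj h hPd) hcP
        · omega
      have hcF : c ∈ F := by
        by_contra h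
        have := hwmax' c h
        omega
      have hnof : ¬ (T.Adj c w ∧ ∀ x, T.Adj c x → x ∉ F → x = w) := by
        intro hcontra
        exact hwW (hTstep (Or.inr ⟨c, hcF, hcontra.1, hcontra.2⟩))
      push_neg at hnof
      obtain ⟨x, hxadj, hxF, hxw⟩ := hnof hcadj.symm
      rcases tree_adj_dist_cases hTc hTa ρ hxadj with h | h
      · exact hxw (tree_parent_unique (ρ := ρ) hTc hTa hxadj hcadj.symm (by omega) (by omega))
      · have := hwmax' x hxF
        omega
  have hZFS : IsZeroForcingSet G B0 := ⟨k, hFuniv⟩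
  have hZle : zeroForcingNumber G ≤ B0.ncard := Nat.sInf_le ⟨B0, rfl, hZFS⟩
  have hL1 : (L \ {ρ}).ncard ≤ L.ncard - 1 := by
    by_cases h : L.Nonempty
    · rw [Set.ncard_diff_singleton_of_mem (hρ h)]
    · rw [Set.not_nonempty_iff_eq_empty] at h
      simp [h]
  have hDle : D.ncard ≤ 2 * ED.ncard := ncard_endpoints_le ED (Set.toFinite _)
  have hB0le : B0.ncard ≤ (L.ncard - 1) + 2 * ED.ncard :=
    (Set.ncard_union_le _ _).trans (by omega)
  haveI : Fintype T.edgeSet := Set.Finite.fintype (Set.toFinite _)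
  have hTcount : T.edgeSet.ncard + 1 = Fintype.card V := by
    have h := SimpleGraph.IsTree.card_edgeFinset ⟨hTc, hTa⟩ (G := T)
    have h2 : T.edgeSet.ncard = T.edgeFinset.card := by
      rw [Set.ncard_eq_toFinset_card']
      simp [SimpleGraph.edgeFinset]
    omega
  have hsubE : T.edgeSet ⊆ G.edgeSet := SimpleGraph.edgeSet_mono hTle
  have hEDcard : ED.ncard = G.edgeSet.ncard - T.edgeSet.ncard :=
    Set.ncard_diff hsubE (Set.toFinite _)
  have hmn : T.edgeSet.ncard ≤ G.edgeSet.ncard := Set.ncard_le_ncard hsubE (Set.toFinite _)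
  have hsdim : leafCount G ≤ sdim G + 1 := leafCount_le_sdim_add_one hG
  have hLeq : leafCount G = L.ncard := rfl
  omega
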